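/- arXiv:2305.05408 — 2 statements merged into one kernel-verified Lean document; each statement's English description precedes it below -/
import Mathlib

section
/- Let N and M be odd positive integers, let λ, d > 0 with d̄ = d/λ, and let Γ ≥ M be a positive real number. Let (r,θ) and (r',θ') be two points with r, r' > 0 and θ, θ' ∈ [−π/2, π/2]; for each n ∈ {0, ±1, …, ±(N−1)/2} set y_n = nΓd, r_n = √(r² − 2r·y_n·sinθ + y_n²) and r'_n = √(r'² − 2r'·y_n·sinθ' + y_n²), and set Δθ = sinθ − sinθ'. Assume sin(π d̄ Δθ) ≠ 0. Then (1/(MN)) · |Σ_{n=-(N-1)/2}^{(N-1)/2} Σ_{m=-(M-1)/2}^{(M-1)/2} exp(−i·(2π/λ)·(r_n − r'_n))·exp(i·2π·m·d̄·Δθ)| = (1/N)·|Σ_{n=-(N-1)/2}^{(N-1)/2} exp(−i·(2π/λ)·(r_n − r'_n))| · |sin(π M d̄ Δθ)/(M·sin(π d̄ Δθ))|. (Theorem 3: under the sub-array based USW model with common angle, the near-field beam focusing pattern splits into the product of the USW beam focusing pattern of an N-element sparse ULA and the UPW Dirichlet-kernel beam pattern of an M-element collocated ULA.) -/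
open Real

lemma icc_insert (k : ℕ) :
    Finset.Icc (-((k:ℤ)+1)) ((k:ℤ)+1)
      = insert (-((k:ℤ)+1)) (insert ((k:ℤ)+1) (Finset.Icc (-(k:ℤ)) (k:ℤ))) := by
  ext m
  simp only [Finset.mem_Icc, Finset.mem_insert]
  omega

lemma exp_tele (x : ℂ) : ∀ k : ℕ,
    (Complex.exp x - Complex.exp (-x)) *
        ∑ m ∈ Finset.Icc (-(k:ℤ)) (k:ℤ), Complex.exp (2*(m:ℂ)*x)
      = Complex.exp ((2*(k:ℂ)+1)*x) - Complex.exp (-((2*(k:ℂ)+1)*x)) := by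
  intro k
  induction k with
  | zero => simp [show ((2:ℂ)*0+1)*x = x by ring]
  | succ k ih =>
    have h1 : (-((k:ℤ)+1)) ∉ insert ((k:ℤ)+1) (Finset.Icc (-(k:ℤ)) (k:ℤ)) := by
      simp only [Finset.mem_insert, Finset.mem_Icc]; omega
    have h2 : ((k:ℤ)+1) ∉ Finset.Icc (-(k:ℤ)) (k:ℤ) := by
      simp only [Finset.mem_Icc]; omega
    have hcast : ((k+1 : ℕ) : ℤ) = (k:ℤ)+1 := by push_cast; ring
    rw [hcast, icc_insert k, Finset.sum_insert h1, Finset.sum_insert h2]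
    set u := Complex.exp x with hu
    set v := Complex.exp (-x) with hv
    set A := Complex.exp (2*((k:ℂ)+1)*x) with hA
    have huv : u * v = 1 := by rw [hu, hv, ← Complex.exp_add]; simp
    have hAne : A ≠ 0 := Complex.exp_ne_zero _
    have e1 : Complex.exp (2 * -((k:ℂ)+1) * x) = A⁻¹ := by
      rw [hA, ← Complex.exp_neg]; congr 1; ring
    have e3 : Complex.exp ((2*(k:ℂ)+1)*x) = A * v := by
      rw [hA, hv, ← Complex.exp_add]; congr 1; ring
    have e4 : Complex.exp (-((2*(k:ℂ)+1)*x)) = A⁻¹ * u := by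
      rw [hA, hu, ← Complex.exp_neg, ← Complex.exp_add]; congr 1; ring
    have e5 : Complex.exp ((2*((k:ℂ)+1)+1)*x) = A * u := by
      rw [hA, hu, ← Complex.exp_add]; congr 1; ring
    have e6 : Complex.exp (-((2*((k:ℂ)+1)+1)*x)) = A⁻¹ * v := by
      rw [hA, hv, ← Complex.exp_neg, ← Complex.exp_add]; congr 1; ring
    rw [e3, e4] at ih
    push_cast
    rw [e1, ← hA, e5, e6]
    linear_combination ih

/-- Theorem 3: under the sub-array based USW model with common
angle, the near-field beam focusing pattern splits into the product of the USW
beam focusing pattern of an `N`-element sparse ULA and the UPW Dirichlet-kernel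
beam pattern of an `M`-element collocated ULA. -/
theorem usw_common_angle_beam_focusing_pattern
    (N M : ℕ) (hNpos : 0 < N) (hNodd : Odd N) (hMpos : 0 < M) (hModd : Odd M)
    (lam d Γ : ℝ) (hlam : 0 < lam) (hd : 0 < d) (hΓpos : 0 < Γ) (hΓ : (M : ℝ) ≤ Γ)
    (dbar : ℝ) (hdbar : dbar = d / lam)
    (r r' θ θ' : ℝ) (hr : 0 < r) (hr' : 0 < r')
    (hθ : θ ∈ Set.Icc (-(π / 2)) (π / 2)) (hθ' : θ' ∈ Set.Icc (-(π / 2)) (π / 2))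
    (y rn rn' : ℤ → ℝ) (Δθ : ℝ)
    (hy : ∀ n, y n = (n : ℝ) * Γ * d)
    (hrn : ∀ n, rn n = Real.sqrt (r ^ 2 - 2 * r * y n * Real.sin θ + (y n) ^ 2))
    (hrn' : ∀ n, rn' n = Real.sqrt (r' ^ 2 - 2 * r' * y n * Real.sin θ' + (y n) ^ 2))
    (hΔθ : Δθ = Real.sin θ - Real.sin θ')
    (hsin : Real.sin (π * dbar * Δθ) ≠ 0) :
    (1 / ((M : ℝ) * N)) *
      ‖(∑ n ∈ Finset.Icc (-(((N : ℤ) - 1) / 2)) (((N : ℤ) - 1) / 2),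
        ∑ m ∈ Finset.Icc (-(((M : ℤ) - 1) / 2)) (((M : ℤ) - 1) / 2),
          Complex.exp (-Complex.I * ((2 * π / lam) * (rn n - rn' n))) *
            Complex.exp (Complex.I * (2 * π * (m : ℝ) * dbar * Δθ)))‖ =
    (1 / (N : ℝ)) *
      ‖(∑ n ∈ Finset.Icc (-(((N : ℤ) - 1) / 2)) (((N : ℤ) - 1) / 2),
        Complex.exp (-Complex.I * ((2 * π / lam) * (rn n - rn' n))))‖ *
      |Real.sin (π * M * dbar * Δθ) / (M * Real.sin (π * dbar * Δθ))| := by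
  obtain ⟨k, hk⟩ := hModd
  have hkM : M = 2 * k + 1 := by omega
  subst hkM
  have hM2 : ((((2*k+1 : ℕ)):ℤ) - 1) / 2 = (k:ℤ) := by push_cast; omega
  set a : ℝ := π * dbar * Δθ with hadef
  -- value of the inner (Dirichlet) sum
  have key := exp_tele (Complex.I * (a:ℂ)) k
  have L1 : Complex.exp (Complex.I*(a:ℂ)) - Complex.exp (-(Complex.I*(a:ℂ)))
      = 2 * Complex.I * ((Real.sin a : ℝ) : ℂ) := by
    rw [show Complex.I*(a:ℂ) = (a:ℂ)*Complex.I by ring, ← neg_mul,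
      Complex.exp_mul_I, Complex.exp_mul_I, Complex.sin_neg, Complex.cos_neg,
      ← Complex.ofReal_sin]
    ring
  have L2 : Complex.exp ((2*(k:ℂ)+1) * (Complex.I*(a:ℂ)))
        - Complex.exp (-((2*(k:ℂ)+1) * (Complex.I*(a:ℂ))))
      = 2 * Complex.I * ((Real.sin ((2*(k:ℝ)+1)*a) : ℝ) : ℂ) := by
    rw [show (2*(k:ℂ)+1) * (Complex.I*(a:ℂ)) = (((2*(k:ℝ)+1)*a : ℝ) : ℂ)*Complex.I by
        push_cast; ring, ← neg_mul,
      Complex.exp_mul_I, Complex.exp_mul_I, Complex.sin_neg, Complex.cos_neg,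
      ← Complex.ofReal_sin]
    ring
  have hterm : ∀ m : ℤ, Complex.exp (2*(m:ℂ)*(Complex.I*(a:ℂ)))
      = Complex.exp (Complex.I * (2 * π * (m : ℝ) * dbar * Δθ)) := by
    intro m; congr 1; rw [hadef]; push_cast; ring
  rw [Finset.sum_congr rfl (fun m _ => hterm m), L1, L2] at key
  have hsa : ((Real.sin a : ℝ) : ℂ) ≠ 0 := Complex.ofReal_ne_zero.mpr hsin
  have hB : (∑ m ∈ Finset.Icc (-(k:ℤ)) (k:ℤ),
        Complex.exp (Complex.I * (2 * π * (m : ℝ) * dbar * Δθ)))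
      = ((Real.sin ((2*(k:ℝ)+1)*a) / Real.sin a : ℝ) : ℂ) := by
    rw [Complex.ofReal_div, eq_div_iff hsa]
    have h2I : (2 : ℂ) * Complex.I ≠ 0 := by simp [Complex.I_ne_zero]
    apply mul_left_cancel₀ h2I
    linear_combination key
  -- factor the double sum
  rw [hM2]
  have hsplit : ∀ n : ℤ,
      (∑ m ∈ Finset.Icc (-(k:ℤ)) (k:ℤ),
        Complex.exp (-Complex.I * ((2 * π / lam) * (rn n - rn' n))) *
          Complex.exp (Complex.I * (2 * π * (m : ℝ) * dbar * Δθ)))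
      = Complex.exp (-Complex.I * ((2 * π / lam) * (rn n - rn' n))) *
          ((Real.sin ((2*(k:ℝ)+1)*a) / Real.sin a : ℝ) : ℂ) := by
    intro n
    rw [← Finset.mul_sum, hB]
  rw [Finset.sum_congr rfl (fun n _ => hsplit n), ← Finset.sum_mul, norm_mul,
    Complex.norm_real, Real.norm_eq_abs]
  have hM1 : Real.sin (π * ((2*k+1 : ℕ):ℝ) * dbar * Δθ) = Real.sin ((2*(k:ℝ)+1)*a) := by
    congr 1; rw [hadef]; push_cast; ring
  rw [hM1]
  have hMne : ((2*k+1 : ℕ):ℝ) ≠ 0 := by positivity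
  rw [show Real.sin ((2*(k:ℝ)+1)*a) / (((2*k+1 : ℕ):ℝ) * Real.sin a)
      = (Real.sin ((2*(k:ℝ)+1)*a) / Real.sin a) / ((2*k+1 : ℕ):ℝ) by
    rw [div_div, mul_comm (Real.sin a) (((2*k+1 : ℕ)):ℝ)]]
  rw [abs_div, abs_div, abs_div, abs_of_pos (by positivity : (0:ℝ) < ((2*k+1 : ℕ):ℝ))]
  ring
end

section
/- Let ν be a nonzero real number, μ ∈ ℝ, and let T > 0 be a real number. Define the complex Fresnel integral F(x) = ∫_0^x exp(i·t²) dt for x ∈ ℝ. Then |∫_{−1/2}^{1/2} exp(i·(ν·T²·x² + μ·T·x)) dx| = |F(√|ν|·T/2 + μ/(2√|ν|)) + F(√|ν|·T/2 − μ/(2√|ν|))| / (√|ν|·T). (The modulus of the quadratic-phase integral is given by Fresnel integrals for both signs of ν, covering cases 1 and 3 in the proof of Corollary 2.) -/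
open Real

noncomputable def fresg (t : ℝ) : ℂ := Complex.exp (Complex.I * (t : ℂ) ^ 2)

noncomputable def fresF (x : ℝ) : ℂ := ∫ t in (0 : ℝ)..x, fresg t

lemma fresg_cont : Continuous fresg := by
  unfold fresg
  exact Complex.continuous_exp.comp (continuous_const.mul (Complex.continuous_ofReal.pow 2))

lemma fresg_int (a b : ℝ) : IntervalIntegrable fresg MeasureTheory.volume a b :=
  fresg_cont.intervalIntegrable a b

lemma fresF_neg (x : ℝ) : fresF (-x) = - fresF x := by
  unfold fresF
  have h2 : (fun t : ℝ => fresg (-t)) = fresg := by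
    funext t; unfold fresg; push_cast; ring_nf
  have h := intervalIntegral.integral_comp_neg (a := (0:ℝ)) (b := x) fresg
  simp only [neg_zero] at h
  rw [intervalIntegral.integral_symm, ← h]
  rw [show (fun t : ℝ => fresg (-t)) = fresg from h2]

lemma fres_affine (c d : ℝ) (hc : c ≠ 0) :
    (∫ x in (-(1/2) : ℝ)..(1/2), fresg (c * x + d)) =
      (c : ℂ)⁻¹ * (fresF (c/2 + d) + fresF (c/2 - d)) := by
  rw [intervalIntegral.integral_comp_mul_add fresg hc d]
  have h1 : c * (-(1/2)) + d = -(c/2 - d) := by ring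
  have h2 : c * (1/2) + d = c/2 + d := by ring
  rw [h1, h2]
  have key : (∫ x in (-(c/2 - d) : ℝ)..(c/2 + d), fresg x)
      = fresF (c/2 + d) - fresF (-(c/2 - d)) := by
    unfold fresF
    rw [intervalIntegral.integral_interval_sub_left (fresg_int 0 _) (fresg_int 0 _)]
  rw [key, fresF_neg, sub_neg_eq_add, Complex.real_smul]
  push_cast
  ring

/-- The positive-`ν` case. -/
lemma pos_case (ν μ T : ℝ) (hν : 0 < ν) (hT : 0 < T) :
    ‖∫ x in (-(1 / 2) : ℝ)..(1 / 2),
        Complex.exp (Complex.I * ((ν * T ^ 2 * x ^ 2 + μ * T * x : ℝ) : ℂ))‖ =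
    ‖fresF (Real.sqrt ν * T / 2 + μ / (2 * Real.sqrt ν)) +
        fresF (Real.sqrt ν * T / 2 - μ / (2 * Real.sqrt ν))‖ /
      (Real.sqrt ν * T) := by
  set s : ℝ := Real.sqrt ν with hs_def
  have hs : 0 < s := Real.sqrt_pos.mpr hν
  have hs2 : s ^ 2 = ν := Real.sq_sqrt hν.le
  have key : ∀ x : ℝ, ν * T ^ 2 * x ^ 2 + μ * T * x
      = (s * T * x + μ / (2 * s)) ^ 2 - μ ^ 2 / (4 * ν) := by
    intro x
    rw [← hs2]
    field_simp
    ring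
  have hint : ∀ x : ℝ,
      Complex.exp (Complex.I * ((ν * T ^ 2 * x ^ 2 + μ * T * x : ℝ) : ℂ))
      = Complex.exp (Complex.I * ((-(μ ^ 2 / (4 * ν)) : ℝ) : ℂ)) *
          fresg (s * T * x + μ / (2 * s)) := by
    intro x
    unfold fresg
    rw [← Complex.exp_add, key x]
    congr 1
    push_cast
    ring
  calc ‖∫ x in (-(1 / 2) : ℝ)..(1 / 2),
        Complex.exp (Complex.I * ((ν * T ^ 2 * x ^ 2 + μ * T * x : ℝ) : ℂ))‖
      = ‖Complex.exp (Complex.I * ((-(μ ^ 2 / (4 * ν)) : ℝ) : ℂ)) *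
          ∫ x in (-(1 / 2) : ℝ)..(1 / 2), fresg (s * T * x + μ / (2 * s))‖ := by
        rw [← intervalIntegral.integral_const_mul]
        congr 1
        apply intervalIntegral.integral_congr
        intro x _
        exact hint x
    _ = ‖∫ x in (-(1 / 2) : ℝ)..(1 / 2), fresg (s * T * x + μ / (2 * s))‖ := by
        have h0 : (Complex.I * ((-(μ ^ 2 / (4 * ν)) : ℝ) : ℂ)).re = 0 := by
          rw [Complex.mul_re, Complex.I_re, Complex.I_im, Complex.ofReal_re,
            Complex.ofReal_im]
          ring
        rw [norm_mul, Complex.norm_exp, h0, Real.exp_zero, one_mul]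
    _ = ‖(((s * T : ℝ)) : ℂ)⁻¹ *
          (fresF (s * T / 2 + μ / (2 * s)) + fresF (s * T / 2 - μ / (2 * s)))‖ := by
        rw [fres_affine (s * T) (μ / (2 * s)) (by positivity)]
    _ = ‖fresF (s * T / 2 + μ / (2 * s)) + fresF (s * T / 2 - μ / (2 * s))‖
          / (s * T) := by
        rw [norm_mul, norm_inv, Complex.norm_real, Real.norm_eq_abs, abs_of_pos (by positivity)]
        rw [inv_mul_eq_div]

/-- the modulus of the quadratic-phase integral is given by
Fresnel integrals, for both signs of `ν`. -/
theorem quadratic_phase_integral_abs_fresnel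
    (ν μ T : ℝ) (hν : ν ≠ 0) (hT : 0 < T)
    (F : ℝ → ℂ)
    (hF : ∀ x : ℝ, F x = ∫ t in (0 : ℝ)..x, Complex.exp (Complex.I * (t : ℂ) ^ 2)) :
    ‖∫ x in (-(1 / 2) : ℝ)..(1 / 2),
        Complex.exp (Complex.I * ((ν * T ^ 2 * x ^ 2 + μ * T * x : ℝ) : ℂ))‖ =
    ‖F (Real.sqrt |ν| * T / 2 + μ / (2 * Real.sqrt |ν|)) +
        F (Real.sqrt |ν| * T / 2 - μ / (2 * Real.sqrt |ν|))‖ /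
      (Real.sqrt |ν| * T) := by
  have hFF : ∀ x : ℝ, F x = fresF x := by
    intro x; rw [hF x]; rfl
  rcases lt_or_gt_of_ne hν with hneg | hpos
  · -- ν < 0 : use conjugation to reduce to the positive case.
    have habs : |ν| = -ν := abs_of_neg hneg
    have hconj : ‖∫ x in (-(1 / 2) : ℝ)..(1 / 2),
        Complex.exp (Complex.I * ((ν * T ^ 2 * x ^ 2 + μ * T * x : ℝ) : ℂ))‖
        = ‖∫ x in (-(1 / 2) : ℝ)..(1 / 2),
          Complex.exp (Complex.I * (((-ν) * T ^ 2 * x ^ 2 + (-μ) * T * x : ℝ) : ℂ))‖ := by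
      rw [← Complex.norm_conj]
      congr 1
      rw [intervalIntegral, intervalIntegral, map_sub, ← integral_conj, ← integral_conj]
      congr 1 <;>
      · apply MeasureTheory.integral_congr_ae
        filter_upwards with x
        rw [← Complex.exp_conj]
        congr 1
        push_cast
        simp [Complex.ext_iff]
        ring
    rw [hconj, pos_case (-ν) (-μ) T (by linarith) hT, hFF, hFF, habs]
    have e1 : Real.sqrt (-ν) * T / 2 + -μ / (2 * Real.sqrt (-ν))
        = Real.sqrt (-ν) * T / 2 - μ / (2 * Real.sqrt (-ν)) := by ring
    have e2 : Real.sqrt (-ν) * T / 2 - -μ / (2 * Real.sqrt (-ν))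
        = Real.sqrt (-ν) * T / 2 + μ / (2 * Real.sqrt (-ν)) := by ring
    rw [e1, e2, add_comm]
  · rw [abs_of_pos hpos, hFF, hFF]
    exact pos_case ν μ T hpos hT
end
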